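/- Let φ: ℕ → ℕ be a non-decreasing function, and let G be a triangle-free φ-balled graph with χ(G) > φ(1). Then G has a 5-hole. -/

import Mathlib

/-- `G` has an induced cycle of length `n`. -/
def HasInducedCycle {V : Type*} (G : SimpleGraph V) (n : ℕ) : Prop :=
  Nonempty (SimpleGraph.cycleGraph n ↪g G)

/-- For a non-decreasing `φ : ℕ → ℕ`, a graph `G` is φ-balled if for every non-null
induced subgraph `H = G[W]` of `G` there is a vertex `v` of `H` with
`χ(H) ≤ φ(χ(N²_H(v)))`, where `N²_H(v)` is the set of vertices of `H` at distance
exactly 2 from `v` in `H`. -/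
def PhiBalled {V : Type*} (φ : ℕ → ℕ) (G : SimpleGraph V) : Prop :=
  ∀ W : Set V, W.Nonempty → ∃ v : W,
    (G.induce W).chromaticNumber ≤
      (φ (((G.induce W).induce
        {u : W | (G.induce W).dist v u = 2}).chromaticNumber.toNat) : ℕ∞)

open SimpleGraph in
lemma core_five_hole {V : Type*} (G : SimpleGraph V) (htf : G.CliqueFree 3)
    (v x y : V) (hxy : G.Adj x y) (hx : G.dist v x = 2) (hy : G.dist v y = 2) :
    HasInducedCycle G 5 := by
  classical
  have tri : ∀ p q r : V, G.Adj p q → G.Adj p r → G.Adj q r → False := by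
    intro p q r h1 h2 h3
    exact htf {p, q, r} (is3Clique_triple_iff.mpr ⟨h1, h2, h3⟩)
  -- get midpoints
  obtain ⟨p, hp⟩ := G.exists_walk_of_dist_ne_zero (u := v) (v := x) (by omega)
  obtain ⟨q, hq⟩ := G.exists_walk_of_dist_ne_zero (u := v) (v := y) (by omega)
  rw [hx] at hp; rw [hy] at hq
  obtain ⟨a, hva, hax⟩ : ∃ a, G.Adj v a ∧ G.Adj a x := by
    cases p with
    | nil => simp at hp
    | cons h1 r =>
      cases r with
      | nil => simp at hp
      | cons h2 s =>
        cases s with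
        | nil => exact ⟨_, h1, h2⟩
        | cons h3 t => simp at hp
  obtain ⟨b, hvb, hby⟩ : ∃ b, G.Adj v b ∧ G.Adj b y := by
    cases q with
    | nil => simp at hq
    | cons h1 r =>
      cases r with
      | nil => simp at hq
      | cons h2 s =>
        cases s with
        | nil => exact ⟨_, h1, h2⟩
        | cons h3 t => simp at hq
  have nvx : ¬ G.Adj v x := fun h => by
    rw [← SimpleGraph.dist_eq_one_iff_adj] at h; omega
  have nvy : ¬ G.Adj v y := fun h => by
    rw [← SimpleGraph.dist_eq_one_iff_adj] at h; omega
  have vnex : v ≠ x := fun h => by subst h; simp [SimpleGraph.dist_self] at hx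
  have vney : v ≠ y := fun h => by subst h; simp [SimpleGraph.dist_self] at hy
  have nay : ¬ G.Adj a y := fun h => tri a x y hax h hxy
  have nbx : ¬ G.Adj b x := fun h => tri b y x hby h hxy.symm
  have nab : ¬ G.Adj a b := fun h => tri v a b hva hvb h
  have aneb : a ≠ b := fun h => by subst h; exact nay hby
  have aney : a ≠ y := fun h => by subst h; exact nvy hva
  have bnex : b ≠ x := fun h => by subst h; exact nvx hvb
  refine ⟨⟨⟨![v, a, x, y, b], ?_⟩, ?_⟩⟩
  · intro i j hij
    fin_cases i <;> fin_cases j <;>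
      simp_all [hva.ne, hax.ne, hxy.ne, hby.ne, hvb.ne,
        hva.ne', hax.ne', hxy.ne', hby.ne', hvb.ne'] <;>
      first
        | rfl
        | (exact absurd hij.symm aneb)
        | (exact absurd hij aneb)
        | (exact absurd hij aney)
        | (exact absurd hij.symm aney)
        | (exact absurd hij bnex)
        | (exact absurd hij.symm bnex)
        | (exact absurd hij vnex)
        | (exact absurd hij.symm vnex)
        | (exact absurd hij vney)
        | (exact absurd hij.symm vney)
  · intro i j
    fin_cases i <;> fin_cases j <;>
      simp [SimpleGraph.cycleGraph_adj, Fin.ext_iff] <;>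
      first
        | exact hva | exact hva.symm | exact hax | exact hax.symm
        | exact hxy | exact hxy.symm | exact hby | exact hby.symm
        | exact hvb | exact hvb.symm
        | exact nvx | exact fun h => nvx h.symm
        | exact nvy | exact fun h => nvy h.symm
        | exact nay | exact fun h => nay h.symm
        | exact nbx | exact fun h => nbx h.symm
        | exact nab | exact fun h => nab h.symm
        | exact fun h => G.irrefl h
        | exact iff_of_true hvb (by decide)
        | exact iff_of_true hvb.symm (by decide)
        | exact iff_of_false nvx (by decide)
        | exact iff_of_false (fun h => nvx h.symm) (by decide)
        | exact iff_of_false nvy (by decide)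
        | exact iff_of_false (fun h => nvy h.symm) (by decide)
        | exact iff_of_false nay (by decide)
        | exact iff_of_false (fun h => nay h.symm) (by decide)
        | exact iff_of_false nbx (by decide)
        | exact iff_of_false (fun h => nbx h.symm) (by decide)
        | exact iff_of_false nab (by decide)
        | exact iff_of_false (fun h => nab h.symm) (by decide)

/-- Let φ : ℕ → ℕ be non-decreasing, and let G be a triangle-free φ-balled graph with
χ(G) > φ(1).  Then G has a 5-hole. -/
theorem stmt_18 {V : Type*} [Fintype V] (φ : ℕ → ℕ) (hφ : Monotone φ)
    (G : SimpleGraph V) (htf : G.CliqueFree 3) (hball : PhiBalled φ G)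
    (hchi : (φ 1 : ℕ∞) < G.chromaticNumber) :
    HasInducedCycle G 5 := by
  classical
  have hne : (Set.univ : Set V).Nonempty := by
    rcases isEmpty_or_nonempty V with h | h
    · exfalso
      rw [G.chromaticNumber_eq_zero_of_isEmpty] at hchi
      simp at hchi
    · exact Set.univ_nonempty
  obtain ⟨v, hv⟩ := hball Set.univ hne
  set H := G.induce (Set.univ : Set V) with hH
  set S : Set ↥(Set.univ : Set V) := {u | H.dist v u = 2} with hS
  -- χ(G) ≤ χ(H)
  have hGH : G.chromaticNumber ≤ H.chromaticNumber :=
    SimpleGraph.chromaticNumber_mono_of_hom (G.induceUnivIso).symm.toEmbedding.toHom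
  -- there must be an edge inside S
  have hedge : ∃ u w : ↥S, (H.induce S).Adj u w := by
    by_contra hno
    push_neg at hno
    have hcol : (H.induce S).Colorable 1 :=
      ⟨⟨fun _ => 0, fun h => absurd h (hno _ _)⟩⟩
    have h1 : (H.induce S).chromaticNumber ≤ 1 := by
      simpa using hcol.chromaticNumber_le
    have ht : (H.induce S).chromaticNumber.toNat ≤ 1 := by
      have hne' : (H.induce S).chromaticNumber ≠ ⊤ := by
        intro h; rw [h] at h1; simp at h1
      have : ((H.induce S).chromaticNumber.toNat : ℕ∞) ≤ 1 := by
        rwa [ENat.coe_toNat hne']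
      exact_mod_cast this
    have : G.chromaticNumber ≤ (φ 1 : ℕ∞) :=
      le_trans hGH (le_trans hv (by exact_mod_cast hφ ht))
    exact absurd (lt_of_lt_of_le hchi this) (lt_irrefl _)
  obtain ⟨u, w, huw⟩ := hedge
  -- transfer to G via the iso H ≃g G
  have hx : H.dist v (u : ↥(Set.univ : Set V)) = 2 := u.2
  have hy : H.dist v (w : ↥(Set.univ : Set V)) = 2 := w.2
  have huwH : H.Adj (u : ↥(Set.univ : Set V)) (w : ↥(Set.univ : Set V)) := huw
  have htfH : H.CliqueFree 3 :=
    SimpleGraph.CliqueFree.comap ⟨(G.induceUnivIso).toEmbedding.toCopy⟩ htf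
  obtain ⟨e⟩ := core_five_hole H htfH v _ _ huwH hx hy
  exact ⟨(G.induceUnivIso).toEmbedding.comp e⟩
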